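/- Let G be a finite connected simple graph on n ≥ 2 vertices with Δ(G) ≤ log n, and let X_1, …, X_T be vertices of G chosen independently and uniformly at random with β = (1/T) · Σ_{t=1}^{T} DC(X_t). Then for every ε > 0 and δ ∈ (0,1), if T ≥ ln(2/δ)·(log n)²/(2ε²), the probability that |ADPL(G) − β| > ε is at most δ. -/

import Mathlib

/-- The number of shortest paths between `v` and `u`: walks from `v` to `u`
whose length equals the graph distance (such walks are exactly the shortest paths). -/
noncomputable def nsp {V : Type*} (G : SimpleGraph V) (v u : V) : ℕ :=
  Nat.card {p : G.Walk v u // p.length = G.dist v u}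

/-- The discriminative distance `dd(v,u) = d(v,u) / σ(v,u)`. -/
noncomputable def dd {V : Type*} (G : SimpleGraph V) (v u : V) : ℝ :=
  (G.dist v u : ℝ) / (nsp G v u : ℝ)

/-- The diameter `Δ(G) = max_{v,u} d(v,u)`. -/
noncomputable def graphDiam {V : Type*} [Fintype V] (G : SimpleGraph V) : ℕ :=
  Finset.sup Finset.univ fun v => Finset.sup Finset.univ fun u => G.dist v u

/-- Discriminative closeness `DC(v) = (1/(n-1)) ⬝ Σ_{u ≠ v} dd(v,u)`. -/
noncomputable def DC {V : Type*} [Fintype V] [DecidableEq V] (G : SimpleGraph V) (v : V) : ℝ :=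
  (1 / ((Fintype.card V : ℝ) - 1)) * ∑ u ∈ Finset.univ.erase v, dd G v u

/-- Average discriminative path length `ADPL(G) = (1/(n(n-1))) ⬝ Σ_v Σ_{u ≠ v} dd(v,u)`. -/
noncomputable def ADPL {V : Type*} [Fintype V] [DecidableEq V] (G : SimpleGraph V) : ℝ :=
  (1 / ((Fintype.card V : ℝ) * ((Fintype.card V : ℝ) - 1))) *
    ∑ v : V, ∑ u ∈ Finset.univ.erase v, dd G v u

open Real Finset in

lemma core_ineq (p : ℝ) (hp0 : 0 ≤ p) (hp1 : p ≤ 1) (h : ℝ) :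
    1 - p + p * Real.exp h ≤ Real.exp (p * h + h ^ 2 / 8) := by
  have hD : ∀ x : ℝ, 0 < 1 - p + p * Real.exp x := by
    intro x
    rcases eq_or_lt_of_le hp0 with h0 | h0
    · simp [← h0]
    · nlinarith [Real.exp_pos x, mul_pos h0 (Real.exp_pos x)]
  set ψ : ℝ → ℝ := fun x => p * x + x ^ 2 / 8 - Real.log (1 - p + p * Real.exp x) with hψ
  set ψ' : ℝ → ℝ := fun x => p + x / 4 - p * Real.exp x / (1 - p + p * Real.exp x) with hψ'
  have hderiv : ∀ x : ℝ, HasDerivAt ψ (ψ' x) x := by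
    intro x
    have h1 : HasDerivAt (fun x : ℝ => 1 - p + p * Real.exp x) (p * Real.exp x) x := by
      simpa using ((Real.hasDerivAt_exp x).const_mul p).const_add (1 - p)
    have hlog : HasDerivAt (fun x : ℝ => Real.log (1 - p + p * Real.exp x))
        (p * Real.exp x / (1 - p + p * Real.exp x)) x := h1.log (hD x).ne'
    have hpoly : HasDerivAt (fun x : ℝ => p * x + x ^ 2 / 8) (p + x / 4) x := by
      have := ((hasDerivAt_pow 2 x).div_const 8).const_add 0
      have h2 : HasDerivAt (fun x : ℝ => p * x) p x := by
        simpa using (hasDerivAt_id x).const_mul p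
      have := h2.add ((hasDerivAt_pow 2 x).div_const 8)
      exact this.congr_deriv (by ring)
    exact hpoly.sub hlog
  have hderiv' : ∀ x : ℝ, HasDerivAt ψ'
      (1 / 4 - p * Real.exp x * (1 - p) / (1 - p + p * Real.exp x) ^ 2) x := by
    intro x
    have h1 : HasDerivAt (fun x : ℝ => 1 - p + p * Real.exp x) (p * Real.exp x) x := by
      simpa using ((Real.hasDerivAt_exp x).const_mul p).const_add (1 - p)
    have hnum : HasDerivAt (fun x : ℝ => p * Real.exp x) (p * Real.exp x) x :=
      (Real.hasDerivAt_exp x).const_mul p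
    have hq : HasDerivAt (fun x : ℝ => p * Real.exp x / (1 - p + p * Real.exp x))
        ((p * Real.exp x * (1 - p + p * Real.exp x) - p * Real.exp x * (p * Real.exp x)) /
          (1 - p + p * Real.exp x) ^ 2) x := hnum.div h1 (hD x).ne'
    have hlin : HasDerivAt (fun x : ℝ => p + x / 4) (1 / 4) x := by
      simpa using ((hasDerivAt_id x).div_const 4).const_add p
    have := hlin.sub hq
    refine this.congr_deriv ?_
    have hDx := (hD x).ne'
    field_simp
    ring
  have hd'nonneg : ∀ x : ℝ, 0 ≤ 1 / 4 - p * Real.exp x * (1 - p) / (1 - p + p * Real.exp x) ^ 2 := by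
    intro x
    rw [sub_nonneg, div_le_iff₀ (pow_pos (hD x) 2)]
    nlinarith [sq_nonneg (1 - p - p * Real.exp x), Real.exp_pos x]
  have hmono' : Monotone ψ' :=
    monotone_of_deriv_nonneg (fun x => (hderiv' x).differentiableAt) (fun x => by
      rw [(hderiv' x).deriv]; exact hd'nonneg x)
  have hψ'0 : ψ' 0 = 0 := by
    simp [hψ', Real.exp_zero]
  have hψ0 : ψ 0 = 0 := by
    have : (1 : ℝ) - p + p * Real.exp 0 = 1 := by rw [Real.exp_zero]; ring
    simp [hψ, this]
  have hψdiff : Differentiable ℝ ψ := fun x => (hderiv x).differentiableAt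
  have hψnonneg : 0 ≤ ψ h := by
    rcases le_total 0 h with hh | hh
    · have : MonotoneOn ψ (Set.Ici 0) := by
        apply monotoneOn_of_deriv_nonneg (convex_Ici 0) hψdiff.continuous.continuousOn
          (fun x _ => (hψdiff x).differentiableWithinAt)
        intro x hx
        rw [interior_Ici] at hx
        rw [(hderiv x).deriv]
        have := hmono' (le_of_lt hx)
        rwa [hψ'0] at this
      have := this (Set.self_mem_Ici) (Set.mem_Ici.mpr hh) hh
      rwa [hψ0] at this
    · have : AntitoneOn ψ (Set.Iic 0) := by
        apply antitoneOn_of_deriv_nonpos (convex_Iic 0) hψdiff.continuous.continuousOn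
          (fun x _ => (hψdiff x).differentiableWithinAt)
        intro x hx
        rw [interior_Iic] at hx
        rw [(hderiv x).deriv]
        have := hmono' (le_of_lt hx)
        rwa [hψ'0] at this
      have := this (Set.mem_Iic.mpr hh) (Set.self_mem_Iic) hh
      rwa [hψ0] at this
  have hlog : Real.log (1 - p + p * Real.exp h) ≤ p * h + h ^ 2 / 8 := by
    have := hψnonneg
    simp only [hψ] at this
    linarith
  exact (Real.log_le_iff_le_exp (hD h)).mp hlog

open Real Finset in
lemma mgf_bound {V : Type*} [Fintype V] (g : V → ℝ) (a b s : ℝ)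
    (hab : a < b) (ha0 : a ≤ 0) (hb0 : 0 ≤ b)
    (hga : ∀ v, a ≤ g v) (hgb : ∀ v, g v ≤ b) (hmean : ∑ v, g v = 0) :
    ∑ v : V, Real.exp (s * g v) ≤ (Fintype.card V : ℝ) * Real.exp (s ^ 2 * (b - a) ^ 2 / 8) := by
  have hba : (0:ℝ) < b - a := sub_pos.2 hab
  have key : ∀ v, Real.exp (s * g v) ≤
      ((b - g v) * Real.exp (s * a) + (g v - a) * Real.exp (s * b)) / (b - a) := by
    intro v
    have hw1 : (0:ℝ) ≤ (b - g v) / (b - a) := div_nonneg (by linarith [hgb v]) hba.le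
    have hw2 : (0:ℝ) ≤ (g v - a) / (b - a) := div_nonneg (by linarith [hga v]) hba.le
    have hw : (b - g v) / (b - a) + (g v - a) / (b - a) = 1 := by field_simp; ring
    have h := convexOn_exp.2 (Set.mem_univ (s * a)) (Set.mem_univ (s * b)) hw1 hw2 hw
    simp only [smul_eq_mul] at h
    have hx : (b - g v) / (b - a) * (s * a) + (g v - a) / (b - a) * (s * b) = s * g v := by
      field_simp; ring
    rw [hx] at h
    calc Real.exp (s * g v) ≤ (b - g v) / (b - a) * Real.exp (s * a)
          + (g v - a) / (b - a) * Real.exp (s * b) := h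
      _ = ((b - g v) * Real.exp (s * a) + (g v - a) * Real.exp (s * b)) / (b - a) := by ring
  have hsum : ∑ v : V, Real.exp (s * g v) ≤
      (Fintype.card V : ℝ) * ((b * Real.exp (s * a) - a * Real.exp (s * b)) / (b - a)) := by
    calc ∑ v : V, Real.exp (s * g v)
        ≤ ∑ v : V, ((b - g v) * Real.exp (s * a) + (g v - a) * Real.exp (s * b)) / (b - a) :=
          Finset.sum_le_sum fun v _ => key v
      _ = (Fintype.card V : ℝ) * ((b * Real.exp (s * a) - a * Real.exp (s * b)) / (b - a)) := by
          simp only [div_eq_mul_inv, ← Finset.sum_mul]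
          rw [Finset.sum_add_distrib, ← Finset.sum_mul, ← Finset.sum_mul,
            Finset.sum_sub_distrib, Finset.sum_sub_distrib, hmean,
            Finset.sum_const, Finset.sum_const, Finset.card_univ]
          push_cast
          ring
  set p : ℝ := -a / (b - a) with hp
  set hh : ℝ := s * (b - a) with hhh
  have hp0 : 0 ≤ p := div_nonneg (by linarith) hba.le
  have hp1 : p ≤ 1 := by rw [hp, div_le_one hba]; linarith
  have hcore := core_ineq p hp0 hp1 hh
  have heq : (b * Real.exp (s * a) - a * Real.exp (s * b)) / (b - a)
      = Real.exp (s * a) * (1 - p + p * Real.exp hh) := by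
    have hsb : Real.exp (s * b) = Real.exp (s * a) * Real.exp hh := by
      rw [← Real.exp_add, hhh]; ring_nf
    rw [hsb, hp]
    field_simp
    ring
  have hfin : Real.exp (s * a) * (1 - p + p * Real.exp hh) ≤
      Real.exp (s ^ 2 * (b - a) ^ 2 / 8) := by
    calc Real.exp (s * a) * (1 - p + p * Real.exp hh)
        ≤ Real.exp (s * a) * Real.exp (p * hh + hh ^ 2 / 8) := by
          apply mul_le_mul_of_nonneg_left hcore (Real.exp_pos _).le
      _ = Real.exp (s * a + (p * hh + hh ^ 2 / 8)) := by rw [← Real.exp_add]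
      _ = Real.exp (s ^ 2 * (b - a) ^ 2 / 8) := by
          congr 1
          rw [hp, hhh]
          field_simp
          ring
  calc ∑ v : V, Real.exp (s * g v)
      ≤ (Fintype.card V : ℝ) * ((b * Real.exp (s * a) - a * Real.exp (s * b)) / (b - a)) := hsum
    _ ≤ (Fintype.card V : ℝ) * Real.exp (s ^ 2 * (b - a) ^ 2 / 8) := by
        apply mul_le_mul_of_nonneg_left _ (Nat.cast_nonneg _)
        rw [heq]; exact hfin

open Real Finset in
lemma chernoff {V : Type*} [Fintype V] [DecidableEq V] (g : V → ℝ) (a b : ℝ)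
    (hab : a < b) (ha0 : a ≤ 0) (hb0 : 0 ≤ b)
    (hga : ∀ v, a ≤ g v) (hgb : ∀ v, g v ≤ b) (hmean : ∑ v, g v = 0)
    (T : ℕ) (ε : ℝ) (hε : 0 < ε) [DecidablePred fun ω : Fin T → V => (T : ℝ) * ε < ∑ t, g (ω t)] :
    ((Finset.univ.filter fun ω : Fin T → V => (T : ℝ) * ε < ∑ t, g (ω t)).card : ℝ)
      ≤ (Fintype.card V : ℝ) ^ T * Real.exp (-(2 * T * ε ^ 2 / (b - a) ^ 2)) := by
  have hba : (0:ℝ) < b - a := sub_pos.2 hab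
  set s : ℝ := 4 * ε / (b - a) ^ 2 with hs
  have hspos : 0 < s := by positivity
  set A := Finset.univ.filter fun ω : Fin T → V => (T : ℝ) * ε < ∑ t, g (ω t) with hA
  have hprod : ∑ ω : Fin T → V, Real.exp (s * ∑ t, g (ω t))
      = (∑ v : V, Real.exp (s * g v)) ^ T := by
    rw [Fintype.sum_pow]
    exact Finset.sum_congr rfl fun ω _ => by rw [Finset.mul_sum, Real.exp_sum]
  have hcount : (A.card : ℝ) * Real.exp (s * ((T : ℝ) * ε))
      ≤ ∑ ω : Fin T → V, Real.exp (s * ∑ t, g (ω t)) := by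
    calc (A.card : ℝ) * Real.exp (s * ((T : ℝ) * ε))
        = ∑ _ω ∈ A, Real.exp (s * ((T : ℝ) * ε)) := by
          rw [Finset.sum_const, nsmul_eq_mul]
      _ ≤ ∑ ω ∈ A, Real.exp (s * ∑ t, g (ω t)) := by
          apply Finset.sum_le_sum
          intro ω hω
          have := (Finset.mem_filter.mp hω).2
          exact Real.exp_le_exp.mpr (by nlinarith)
      _ ≤ ∑ ω : Fin T → V, Real.exp (s * ∑ t, g (ω t)) :=
          Finset.sum_le_sum_of_subset_of_nonneg (Finset.filter_subset _ _)
            (fun ω _ _ => (Real.exp_pos _).le)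
  have hmgf := mgf_bound g a b s hab ha0 hb0 hga hgb hmean
  have hpow : (∑ v : V, Real.exp (s * g v)) ^ T
      ≤ ((Fintype.card V : ℝ) * Real.exp (s ^ 2 * (b - a) ^ 2 / 8)) ^ T := by
    apply pow_le_pow_left₀ (Finset.sum_nonneg fun v _ => (Real.exp_pos _).le) hmgf
  have hmain : (A.card : ℝ) ≤ ((Fintype.card V : ℝ) * Real.exp (s ^ 2 * (b - a) ^ 2 / 8)) ^ T
      / Real.exp (s * ((T : ℝ) * ε)) := by
    rw [le_div_iff₀ (Real.exp_pos _)]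
    calc (A.card : ℝ) * Real.exp (s * ((T : ℝ) * ε))
        ≤ ∑ ω : Fin T → V, Real.exp (s * ∑ t, g (ω t)) := hcount
      _ = (∑ v : V, Real.exp (s * g v)) ^ T := hprod
      _ ≤ _ := hpow
  calc (A.card : ℝ) ≤ _ := hmain
    _ = (Fintype.card V : ℝ) ^ T * Real.exp (-(2 * T * ε ^ 2 / (b - a) ^ 2)) := by
        rw [mul_pow, ← Real.exp_nat_mul, mul_div_assoc, ← Real.exp_sub]
        congr 2
        rw [hs]
        have hba' : b - a ≠ 0 := hba.ne'
        field_simp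
        ring

/-- If `Δ(G) ≤ log n`, then for `T ≥ ln(2/δ)(log n)²/(2ε²)` vertices chosen
independently and uniformly at random (i.e. `ω : Fin T → V` drawn uniformly,
`X_t = ω t`) and `β(ω) = (1/T) Σ_t DC(X_t)`, the probability (number of favourable
outcomes divided by the total number of outcomes) that `|ADPL(G) − β| > ε` is at most `δ`. -/


theorem stmt6 {V : Type*} [Fintype V] [DecidableEq V] (G : SimpleGraph V)
    (hconn : G.Connected) (hn : 2 ≤ Fintype.card V)
    (hdiam : (graphDiam G : ℝ) ≤ Real.log (Fintype.card V))
    (T : ℕ) (hT : 0 < T) (ε : ℝ) (hε : 0 < ε) (δ : ℝ) (hδ0 : 0 < δ) (hδ1 : δ < 1)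
    (hTbound : Real.log (2 / δ) * Real.log (Fintype.card V) ^ 2 / (2 * ε ^ 2) ≤ (T : ℝ)) :
    (Nat.card {ω : Fin T → V |
        ε < |ADPL G - (1 / (T : ℝ)) * ∑ t : Fin T, DC G (ω t)|} : ℝ) /
      (Fintype.card (Fin T → V) : ℝ) ≤ δ := by
  classical
  set n : ℕ := Fintype.card V with hncard
  set L : ℝ := Real.log n with hLdef
  have hn2 : (2:ℝ) ≤ (n:ℝ) := by exact_mod_cast hn
  have hL : 0 < L := Real.log_pos (by linarith)
  have hnR : (0:ℝ) < (n:ℝ) := by linarith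
  -- number of shortest paths is at least 1
  have hσ : ∀ v u : V, 1 ≤ nsp G v u := by
    intro v u
    haveI : DecidableRel G.Adj := Classical.decRel _
    haveI hfin : Fintype {p : G.Walk v u // p.length = G.dist v u} :=
      SimpleGraph.fintypeSubtypeWalkLength G v u (G.dist v u)
    have hne : Nonempty {p : G.Walk v u // p.length = G.dist v u} := by
      obtain ⟨p, hp⟩ := hconn.exists_walk_length_eq_dist v u
      exact ⟨⟨p, hp⟩⟩
    exact Nat.card_pos
  have hdd0 : ∀ v u : V, 0 ≤ dd G v u := fun v u =>
    div_nonneg (Nat.cast_nonneg _) (Nat.cast_nonneg _)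
  have hddL : ∀ v u : V, dd G v u ≤ L := by
    intro v u
    have h1 : dd G v u ≤ (G.dist v u : ℝ) :=
      div_le_self (Nat.cast_nonneg _) (by exact_mod_cast hσ v u)
    have h2 : G.dist v u ≤ graphDiam G :=
      (Finset.le_sup (f := fun u => G.dist v u) (Finset.mem_univ u)).trans
        (Finset.le_sup (f := fun v => Finset.univ.sup fun u => G.dist v u) (Finset.mem_univ v))
    have h3 : (G.dist v u : ℝ) ≤ (graphDiam G : ℝ) := by exact_mod_cast h2
    linarith [hdiam]
  have hn1 : (1:ℝ) ≤ (n:ℝ) - 1 := by linarith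
  have hcardE : ∀ v : V, ((Finset.univ.erase v).card : ℝ) = (n:ℝ) - 1 := by
    intro v
    rw [Finset.card_erase_of_mem (Finset.mem_univ v), Finset.card_univ, ← hncard,
      Nat.cast_sub (by omega)]
    simp
  have hDC0 : ∀ v : V, 0 ≤ DC G v := by
    intro v
    apply mul_nonneg (by positivity)
    exact Finset.sum_nonneg fun u _ => hdd0 v u
  have hDCL : ∀ v : V, DC G v ≤ L := by
    intro v
    rw [DC]
    have hsum : ∑ u ∈ Finset.univ.erase v, dd G v u ≤ ((Finset.univ.erase v).card : ℝ) * L := by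
      have := Finset.sum_le_card_nsmul (Finset.univ.erase v) (fun u => dd G v u) L
        (fun u _ => hddL v u)
      simpa [nsmul_eq_mul] using this
    rw [hcardE v] at hsum
    calc (1 / ((n:ℝ) - 1)) * ∑ u ∈ Finset.univ.erase v, dd G v u
        ≤ (1 / ((n:ℝ) - 1)) * (((n:ℝ) - 1) * L) := by
          apply mul_le_mul_of_nonneg_left hsum (by positivity)
      _ = L := by field_simp
  have hμsum : ∑ v : V, DC G v = (n:ℝ) * ADPL G := by
    simp only [DC, ADPL, ← Finset.mul_sum]
    rw [← hncard]
    have h1 : ((n:ℝ) - 1) ≠ 0 := by linarith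
    field_simp
  have hμ0 : 0 ≤ ADPL G := by
    have h := Finset.sum_nonneg (fun v (_ : v ∈ Finset.univ) => hDC0 v)
    rw [hμsum] at h
    nlinarith
  have hμL : ADPL G ≤ L := by
    have h := Finset.sum_le_card_nsmul Finset.univ (fun v => DC G v) L (fun v _ => hDCL v)
    rw [hμsum, Finset.card_univ, ← hncard, nsmul_eq_mul] at h
    nlinarith
  set μ : ℝ := ADPL G with hμdef
  set g : V → ℝ := fun v => DC G v - μ with hgdef
  have hmean : ∑ v : V, g v = 0 := by
    simp only [hgdef, Finset.sum_sub_distrib, Finset.sum_const, Finset.card_univ, ← hncard,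
      nsmul_eq_mul, hμsum]
    ring
  have hmean' : ∑ v : V, (fun v => -(g v)) v = 0 := by
    simp [Finset.sum_neg_distrib, hmean]
  have hga : ∀ v, -μ ≤ g v := fun v => by simp only [hgdef]; linarith [hDC0 v]
  have hgb : ∀ v, g v ≤ L - μ := fun v => by simp only [hgdef]; linarith [hDCL v]
  have hab : -μ < L - μ := by linarith
  -- the two one-sided events
  set P1 : (Fin T → V) → Prop := fun ω => (T : ℝ) * ε < ∑ t, g (ω t) with hP1
  set P2 : (Fin T → V) → Prop := fun ω => (T : ℝ) * ε < ∑ t, (fun v => -(g v)) (ω t) with hP2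
  have hC1 := chernoff g (-μ) (L - μ) hab (by linarith) (by linarith) hga hgb hmean T ε hε
  have hC2 := chernoff (fun v => -(g v)) (-(L - μ)) μ (by linarith) (by linarith) (by linarith)
    (fun v => by simpa using neg_le_neg (hgb v)) (fun v => by simpa using neg_le_neg (hga v))
    hmean' T ε hε
  have hba1 : (L - μ) - (-μ) = L := by ring
  have hba2 : μ - (-(L - μ)) = L := by ring
  rw [hba1] at hC1
  rw [hba2] at hC2
  set P : (Fin T → V) → Prop :=
    fun ω => ε < |ADPL G - (1 / (T : ℝ)) * ∑ t : Fin T, DC G (ω t)| with hPdef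
  have hTR : (0:ℝ) < (T:ℝ) := by exact_mod_cast hT
  have himp : ∀ ω : Fin T → V, P ω → P1 ω ∨ P2 ω := by
    intro ω hω
    have hsg : ∑ t : Fin T, g (ω t) = (∑ t : Fin T, DC G (ω t)) - (T:ℝ) * μ := by
      simp [hgdef, Finset.sum_sub_distrib, Finset.sum_const, Finset.card_univ, nsmul_eq_mul]
    have hrw : ADPL G - (1 / (T : ℝ)) * ∑ t : Fin T, DC G (ω t)
        = -((1 / (T:ℝ)) * ∑ t : Fin T, g (ω t)) := by
      rw [hsg, ← hμdef]
      field_simp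
      ring
    rw [hPdef] at hω
    simp only [hrw, abs_neg, abs_mul, abs_of_pos (by positivity : (0:ℝ) < 1/(T:ℝ))] at hω
    have habs : (T:ℝ) * ε < |∑ t : Fin T, g (ω t)| := by
      rw [mul_comm]
      calc ε * (T:ℝ) < (1/(T:ℝ)) * |∑ t : Fin T, g (ω t)| * (T:ℝ) := by
            apply mul_lt_mul_of_pos_right hω hTR
        _ = |∑ t : Fin T, g (ω t)| := by field_simp
    rcases lt_abs.mp habs with h | h
    · exact Or.inl h
    · right
      rw [hP2]
      simp only [Finset.sum_neg_distrib]
      linarith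
  -- counting
  have hcardP : (Nat.card {ω : Fin T → V | P ω} : ℕ) = (Finset.univ.filter P).card := by
    rw [Set.coe_setOf, Nat.card_eq_fintype_card, Fintype.card_subtype]
  have hsub : Finset.univ.filter P ⊆ (Finset.univ.filter P1) ∪ (Finset.univ.filter P2) := by
    intro ω hω
    rw [Finset.mem_filter] at hω
    rcases himp ω hω.2 with h | h
    · exact Finset.mem_union_left _ (Finset.mem_filter.mpr ⟨Finset.mem_univ _, h⟩)
    · exact Finset.mem_union_right _ (Finset.mem_filter.mpr ⟨Finset.mem_univ _, h⟩)
  have hcount : ((Finset.univ.filter P).card : ℝ)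
      ≤ ((Finset.univ.filter P1).card : ℝ) + ((Finset.univ.filter P2).card : ℝ) := by
    have := (Finset.card_le_card hsub).trans (Finset.card_union_le _ _)
    exact_mod_cast this
  -- final numeric bound
  have hexp : 2 * Real.exp (-(2 * (T:ℝ) * ε ^ 2 / L ^ 2)) ≤ δ := by
    have h2δ : (0:ℝ) < 2/δ := by positivity
    have hlog2 : Real.log (2/δ) ≤ 2 * (T:ℝ) * ε ^ 2 / L ^ 2 := by
      rw [div_le_iff₀ (by positivity : (0:ℝ) < 2 * ε^2)] at hTbound
      rw [le_div_iff₀ (by positivity : (0:ℝ) < L^2)]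
      nlinarith
    have hle : 2/δ ≤ Real.exp (2 * (T:ℝ) * ε ^ 2 / L ^ 2) := by
      calc 2/δ = Real.exp (Real.log (2/δ)) := (Real.exp_log h2δ).symm
        _ ≤ _ := Real.exp_le_exp.mpr hlog2
    rw [div_le_iff₀ hδ0] at hle
    rw [Real.exp_neg]
    calc 2 * (Real.exp (2 * (T:ℝ) * ε ^ 2 / L ^ 2))⁻¹
        ≤ (Real.exp (2 * (T:ℝ) * ε ^ 2 / L ^ 2) * δ) * (Real.exp (2 * (T:ℝ) * ε ^ 2 / L ^ 2))⁻¹ := by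
          apply mul_le_mul_of_nonneg_right hle (by positivity)
      _ = δ := by field_simp
  have hcardΩ : (Fintype.card (Fin T → V) : ℝ) = (n:ℝ) ^ T := by
    rw [Fintype.card_fun, Fintype.card_fin, ← hncard]
    push_cast
    ring
  have hnT : (0:ℝ) < (n:ℝ) ^ T := by positivity
  rw [hcardΩ, div_le_iff₀ hnT]
  calc (Nat.card {ω : Fin T → V | P ω} : ℝ)
      = ((Finset.univ.filter P).card : ℝ) := by exact_mod_cast hcardP
    _ ≤ ((Finset.univ.filter P1).card : ℝ) + ((Finset.univ.filter P2).card : ℝ) := hcount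
    _ ≤ (n:ℝ) ^ T * Real.exp (-(2 * T * ε ^ 2 / L ^ 2))
        + (n:ℝ) ^ T * Real.exp (-(2 * T * ε ^ 2 / L ^ 2)) := by
          apply add_le_add hC1 hC2
    _ = 2 * Real.exp (-(2 * (T:ℝ) * ε ^ 2 / L ^ 2)) * (n:ℝ) ^ T := by ring
    _ ≤ δ * (n:ℝ) ^ T := by
          apply mul_le_mul_of_nonneg_right hexp (le_of_lt hnT)
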